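/- Let M be a monoid, FI(M) the free inverse monoid on the underlying set of M, and u ↦ D_u the map into the free restriction monoid FR(M) defined by D_1 = 1, D_{v[a]} = (D_v ⌊a⌋)^*, D_{v[a]⁻¹} = (⌊a⌋ D_v)^+. Then: (i) D_u = D_{u⁻¹u} for every u ∈ FI(M), and (ii) D_{ef} = D_e D_f for any two idempotents e, f of FI(M). -/

import Mathlib

/-- A restriction monoid: a monoid with unary operations `rstar` (`^*`) and
`rplus` (`^+`) satisfying the standard two-sided restriction monoid axioms. -/
class RestrictionMonoid (S : Type*) extends Monoid S where
  rstar : S → S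
  rplus : S → S
  mul_rstar : ∀ x : S, x * rstar x = x
  rstar_comm : ∀ x y : S, rstar x * rstar y = rstar y * rstar x
  rstar_mul_rstar : ∀ x y : S, rstar (x * rstar y) = rstar x * rstar y
  rstar_left : ∀ x y : S, rstar x * y = y * rstar (x * y)
  rplus_mul : ∀ x : S, rplus x * x = x
  rplus_comm : ∀ x y : S, rplus x * rplus y = rplus y * rplus x
  rplus_mul_rplus : ∀ x y : S, rplus (rplus x * y) = rplus x * rplus y
  mul_rplus : ∀ x y : S, x * rplus y = rplus (x * y) * x
  rstar_rplus : ∀ x : S, rstar (rplus x) = rplus x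
  rplus_rstar : ∀ x : S, rplus (rstar x) = rstar x

open RestrictionMonoid

/-- A projection of a restriction monoid: an element of the form `x^*`. -/
def isProj {S : Type*} [RestrictionMonoid S] (e : S) : Prop := ∃ a : S, rstar a = e

/-- The natural partial order on a restriction monoid: `a ≤ b` iff `a = e * b`
for some projection `e`. -/
def rle {S : Type*} [RestrictionMonoid S] (a b : S) : Prop :=
  ∃ e : S, isProj e ∧ a = e * b

section RMBasic

variable {S : Type*} [RestrictionMonoid S]

open RestrictionMonoid

lemma pone : rstar (1 : S) = 1 := by
  have h := mul_rstar (1 : S); rwa [one_mul] at h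

lemma prstar (x : S) : rstar (rstar x) = rstar x := by
  rw [← rplus_rstar x, rstar_rplus]

lemma rplus_of_p {a : S} (ha : rstar a = a) : rplus a = a := by
  rw [← ha, rplus_rstar]

lemma pcomm {a b : S} (ha : rstar a = a) (hb : rstar b = b) : a * b = b * a := by
  rw [← ha, ← hb, rstar_comm]

lemma rstar_mul_p (x : S) {b : S} (hb : rstar b = b) : rstar (x * b) = rstar x * b := by
  rw [← hb]; exact rstar_mul_rstar x b

lemma pmul {a b : S} (ha : rstar a = a) (hb : rstar b = b) : rstar (a * b) = a * b := by
  rw [rstar_mul_p a hb, ha]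

lemma pidem {b : S} (hb : rstar b = b) : b * b = b := by
  have h := rstar_mul_rstar b b
  rw [mul_rstar] at h
  rw [hb] at h
  exact h.symm

lemma rplus_p_mul {a : S} (ha : rstar a = a) (x : S) : rplus (a * x) = a * rplus x := by
  rw [← rplus_of_p ha, rplus_mul_rplus]

lemma slide1 {a : S} (ha : rstar a = a) (x : S) : x * rstar (a * x) = a * x := by
  have h := rstar_left a x; rw [ha] at h; exact h.symm

lemma slide2 {a : S} (ha : rstar a = a) (x : S) : rplus (x * a) * x = x * a := by
  have h := mul_rplus x a; rw [rplus_of_p ha] at h; exact h.symm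

lemma absorb1 (x y : S) : rstar (x * y) * rstar y = rstar (x * y) := by
  have h : x * y = x * y * rstar y := by rw [mul_assoc, mul_rstar]
  calc rstar (x * y) * rstar y = rstar (x * y * rstar y) := (rstar_mul_p _ (prstar y)).symm
    _ = rstar (x * y) := by rw [← h]

lemma absorb2 (x y : S) : rplus y * rplus (y * x) = rplus (y * x) := by
  have h1 : y * x = rplus y * (y * x) := by rw [← mul_assoc, rplus_mul]
  calc rplus y * rplus (y * x) = rplus (rplus y * (y * x)) := by rw [rplus_mul_rplus]
    _ = rplus (y * x) := by rw [← h1]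

end RMBasic

section FreeInverse

variable {M : Type*} [Monoid M]

/-- The interpretation `D_u` of a word `u` over `M ∪ M⁻¹` in a restriction monoid `S`
with generators `gen : M → S`:  `D_ε = 1`, `D_{v·[a]} = (D_v ⌊a⌋)^*`,
`D_{v·[a]⁻¹} = (⌊a⌋ D_v)^+`  (letters `[a]` are `Sum.inl a`, letters `[a]⁻¹` are
`Sum.inr a`). -/
def Dmap {S : Type*} [RestrictionMonoid S] (gen : M → S)
    (u : FreeMonoid (M ⊕ M)) : S :=
  u.toList.foldl
    (fun d w => match w with
      | Sum.inl a => RestrictionMonoid.rstar (d * gen a)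
      | Sum.inr a => RestrictionMonoid.rplus (gen a * d)) 1

/-- The pairs generating the congruence `ρ` defining the free inverse monoid on `M`:
`w w⁻¹ w = w` for every letter `w`, and `w w⁻¹ z z⁻¹ = z z⁻¹ w w⁻¹` for letters
`w, z` (the inverse of the letter `w` is `Sum.swap w`). -/
def baseRel : FreeMonoid (M ⊕ M) → FreeMonoid (M ⊕ M) → Prop := fun u v =>
  (∃ w : M ⊕ M, u = FreeMonoid.of w * FreeMonoid.of (Sum.swap w) * FreeMonoid.of w ∧
      v = FreeMonoid.of w) ∨
  (∃ w z : M ⊕ M,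
      u = FreeMonoid.of w * FreeMonoid.of (Sum.swap w) *
          (FreeMonoid.of z * FreeMonoid.of (Sum.swap z)) ∧
      v = FreeMonoid.of z * FreeMonoid.of (Sum.swap z) *
          (FreeMonoid.of w * FreeMonoid.of (Sum.swap w)))

/-- The inverse of a word: reverse it and swap each letter. -/
def invWord (u : FreeMonoid (M ⊕ M)) : FreeMonoid (M ⊕ M) :=
  FreeMonoid.ofList (u.toList.reverse.map Sum.swap)

section FoldDev

open RestrictionMonoid

variable {M : Type*} {S : Type*} [RestrictionMonoid S]

/-- One step of the fold defining `Dmap`. -/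
def stepD (gen : M → S) (d : S) (w : M ⊕ M) : S :=
  match w with
  | Sum.inl a => rstar (d * gen a)
  | Sum.inr a => rplus (gen a * d)

/-- Forward fold (`Λ_u`). -/
def FD (gen : M → S) (d : S) (l : List (M ⊕ M)) : S := l.foldl (stepD gen) d

/-- Backward fold (`M_u`, the fold along the inverse word). -/
def BD (gen : M → S) (d : S) (l : List (M ⊕ M)) : S :=
  l.foldr (fun w d => stepD gen d w.swap) d

variable (gen : M → S)

lemma FD_nil (d : S) : FD gen d [] = d := rfl
lemma FD_cons (d : S) (w : M ⊕ M) (l : List (M ⊕ M)) :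
    FD gen d (w :: l) = FD gen (stepD gen d w) l := rfl
lemma FD_append (d : S) (l₁ l₂ : List (M ⊕ M)) :
    FD gen d (l₁ ++ l₂) = FD gen (FD gen d l₁) l₂ := List.foldl_append
lemma BD_nil (d : S) : BD gen d [] = d := rfl
lemma BD_cons (d : S) (w : M ⊕ M) (l : List (M ⊕ M)) :
    BD gen d (w :: l) = stepD gen (BD gen d l) w.swap := rfl
lemma BD_append (d : S) (l₁ l₂ : List (M ⊕ M)) :
    BD gen d (l₁ ++ l₂) = BD gen (BD gen d l₂) l₁ := List.foldr_append

lemma isP_step (d : S) (w : M ⊕ M) : rstar (stepD gen d w) = stepD gen d w := by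
  cases w with
  | inl a => exact prstar _
  | inr a => exact rstar_rplus _

lemma isP_FD {d : S} (hd : rstar d = d) (l : List (M ⊕ M)) :
    rstar (FD gen d l) = FD gen d l := by
  induction l generalizing d with
  | nil => exact hd
  | cons w t ih => exact ih (isP_step gen d w)

lemma isP_BD {d : S} (hd : rstar d = d) (l : List (M ⊕ M)) :
    rstar (BD gen d l) = BD gen d l := by
  cases l with
  | nil => exact hd
  | cons w t => exact isP_step gen _ _

lemma L_frob1 {d f : S} (hd : rstar d = d) (hf : rstar f = f) (w : M ⊕ M) :
    stepD gen d w * f = stepD gen (d * stepD gen f w.swap) w := by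
  cases w with
  | inl a =>
    show rstar (d * gen a) * f = rstar (d * rplus (gen a * f) * gen a)
    have h2 : d * rplus (gen a * f) * gen a = d * (gen a * f) := by
      rw [mul_assoc, slide2 hf (gen a)]
    rw [h2, ← mul_assoc, rstar_mul_p _ hf]
  | inr a =>
    show rplus (gen a * d) * f = rplus (gen a * (d * rstar (f * gen a)))
    have h2 : gen a * (d * rstar (f * gen a)) = f * (gen a * d) := by
      rw [pcomm hd (prstar (f * gen a)), ← mul_assoc, slide1 hf (gen a), mul_assoc]
    rw [h2, rplus_p_mul hf, pcomm (rstar_rplus (gen a * d)) hf]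

lemma L_retrace {d : S} (hd : rstar d = d) (w : M ⊕ M) :
    stepD gen (stepD gen (stepD gen d w) w.swap) w = stepD gen d w := by
  cases w with
  | inl a =>
    show rstar (rplus (gen a * rstar (d * gen a)) * gen a) = rstar (d * gen a)
    rw [slide2 (prstar (d * gen a)) (gen a), rstar_mul_p _ (prstar (d * gen a)),
      rstar_comm, absorb1]
  | inr a =>
    show rplus (gen a * rstar (rplus (gen a * d) * gen a)) = rplus (gen a * d)
    rw [slide2 hd (gen a), rstar_mul_p _ hd, ← mul_assoc, mul_rstar]

lemma L_mono {a b : S} (ha : rstar a = a) (hb : rstar b = b) (w : M ⊕ M) :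
    stepD gen (a * b) w * stepD gen b w = stepD gen (a * b) w := by
  cases w with
  | inl c =>
    show rstar (a * b * gen c) * rstar (b * gen c) = rstar (a * b * gen c)
    rw [mul_assoc]
    exact absorb1 a (b * gen c)
  | inr c =>
    show rplus (gen c * (a * b)) * rplus (gen c * b) = rplus (gen c * (a * b))
    have h : gen c * (a * b) = gen c * b * a := by rw [pcomm ha hb, mul_assoc]
    rw [h, pcomm (rstar_rplus (gen c * b * a)) (rstar_rplus (gen c * b))]
    exact absorb2 a (gen c * b)

lemma L_pair {d : S} (hd : rstar d = d) (w : M ⊕ M) :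
    stepD gen (stepD gen d w) w.swap = stepD gen (stepD gen 1 w) w.swap * d := by
  have h1 := L_frob1 gen (isP_step gen 1 w) hd w.swap
  rw [Sum.swap_swap] at h1
  have h2 : stepD gen 1 w * stepD gen d w = stepD gen d w := by
    rw [pcomm (isP_step gen 1 w) (isP_step gen d w)]
    have h := L_mono gen hd pone w
    rwa [mul_one] at h
  rw [h2] at h1
  exact h1.symm

lemma W_frob (l : List (M ⊕ M)) : ∀ {d f : S}, rstar d = d → rstar f = f →
    FD gen d l * f = FD gen (d * BD gen f l) l := by
  induction l with
  | nil => intro d f _ _; rfl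
  | cons w t ih =>
    intro d f hd hf
    rw [FD_cons, ih (isP_step gen d w) hf, L_frob1 gen hd (isP_BD gen hf t) w,
      ← BD_cons, ← FD_cons]

lemma W_frob2 (l : List (M ⊕ M)) : ∀ {d f : S}, rstar d = d → rstar f = f →
    BD gen d l * f = BD gen (d * FD gen f l) l := by
  induction l with
  | nil => intro d f _ _; rfl
  | cons w t ih =>
    intro d f hd hf
    rw [BD_cons, L_frob1 gen (isP_BD gen hd t) hf w.swap, Sum.swap_swap,
      ih hd (isP_step gen f w), ← FD_cons, ← BD_cons]

lemma W_mono (l : List (M ⊕ M)) : ∀ {a b : S}, rstar a = a → rstar b = b →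
    FD gen (a * b) l * FD gen b l = FD gen (a * b) l := by
  induction l with
  | nil =>
    intro a b _ hb
    show a * b * b = a * b
    rw [mul_assoc, pidem hb]
  | cons w t ih =>
    intro a b ha hb
    have hm := L_mono gen ha hb w
    rw [FD_cons, FD_cons, ← hm, ih (isP_step gen (a * b) w) (isP_step gen b w), hm]
end FoldDev

section Main

open RestrictionMonoid

variable {M : Type*} [Monoid M] {S : Type*} [RestrictionMonoid S] (gen : M → S)

lemma WD {u v : FreeMonoid (M ⊕ M)} (h : ConGen.Rel baseRel u v) :
    ∀ d : S, rstar d = d →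
      FD gen d u.toList = FD gen d v.toList ∧ BD gen d u.toList = BD gen d v.toList := by
  induction h with
  | of x y hxy =>
    intro d hd
    have pK : ∀ v : M ⊕ M, rstar (stepD gen (stepD gen 1 v) v.swap)
        = stepD gen (stepD gen 1 v) v.swap := fun v => isP_step gen _ _
    rcases hxy with ⟨w, hx, hy⟩ | ⟨w, z, hx, hy⟩
    · subst hx; subst hy
      constructor
      · exact L_retrace gen hd w
      · exact L_retrace gen hd w.swap
    · subst hx; subst hy
      constructor
      · show stepD gen (stepD gen (stepD gen (stepD gen d w) w.swap) z) z.swap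
           = stepD gen (stepD gen (stepD gen (stepD gen d z) z.swap) w) w.swap
        rw [L_pair gen hd w, L_pair gen hd z,
          L_pair gen (pmul (pK w) hd) z, L_pair gen (pmul (pK z) hd) w,
          ← mul_assoc, ← mul_assoc, pcomm (pK z) (pK w)]
      · show stepD gen (stepD gen (stepD gen (stepD gen d z.swap.swap) z.swap) w.swap.swap) w.swap
           = stepD gen (stepD gen (stepD gen (stepD gen d w.swap.swap) w.swap) z.swap.swap) z.swap
        simp only [Sum.swap_swap]
        rw [L_pair gen hd z, L_pair gen hd w,
          L_pair gen (pmul (pK z) hd) w, L_pair gen (pmul (pK w) hd) z,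
          ← mul_assoc, ← mul_assoc, pcomm (pK w) (pK z)]
  | refl x => exact fun d hd => ⟨rfl, rfl⟩
  | symm _ ih => exact fun d hd => ⟨(ih d hd).1.symm, (ih d hd).2.symm⟩
  | trans _ _ ih1 ih2 =>
    exact fun d hd => ⟨(ih1 d hd).1.trans (ih2 d hd).1, (ih1 d hd).2.trans (ih2 d hd).2⟩
  | mul h1 h2 ih1 ih2 =>
    intro d hd
    constructor
    · rw [FreeMonoid.toList_mul, FreeMonoid.toList_mul, FD_append, FD_append,
        (ih1 d hd).1, (ih2 _ (isP_FD gen hd _)).1]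
    · rw [FreeMonoid.toList_mul, FreeMonoid.toList_mul, BD_append, BD_append,
        (ih2 d hd).2, (ih1 _ (isP_BD gen hd _)).2]

lemma Dmap_eq (u : FreeMonoid (M ⊕ M)) : Dmap gen u = FD gen 1 u.toList := rfl

lemma FD_inv (d : S) (u : FreeMonoid (M ⊕ M)) :
    FD gen d (invWord u).toList = BD gen d u.toList := by
  show FD gen d (u.toList.reverse.map Sum.swap) = BD gen d u.toList
  unfold FD BD
  rw [List.foldl_map, List.foldl_reverse]

end Main

/-- In the free inverse monoid `FI(M)` (words modulo the congruence `ρ = conGen baseRel`)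
with the map `u ↦ D_u` into the free restriction monoid `FR(M)` (equality in `FR(M)`
being equality under every interpretation in every restriction monoid):
(i) `D_u = D_{u⁻¹ u}` for every `u`, and
(ii) `D_{e f} = D_e D_f` for any two idempotents `e`, `f` of `FI(M)`. -/
theorem stmt19 :
    (∀ u : FreeMonoid (M ⊕ M), ∀ (S : Type*) [RestrictionMonoid S] (gen : M → S),
      Dmap gen (invWord u * u) = Dmap gen u) ∧
    (∀ e f : FreeMonoid (M ⊕ M), conGen baseRel (e * e) e → conGen baseRel (f * f) f →
      ∀ (S : Type*) [RestrictionMonoid S] (gen : M → S),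
        Dmap gen (e * f) = Dmap gen e * Dmap gen f) := by
  constructor
  · intro u S _ gen
    calc Dmap gen (invWord u * u)
        = FD gen 1 ((invWord u).toList ++ u.toList) := by
          rw [Dmap_eq, FreeMonoid.toList_mul]
      _ = FD gen (BD gen 1 u.toList) u.toList := by rw [FD_append, FD_inv]
      _ = FD gen 1 u.toList := by
          have h := W_frob gen u.toList (pone (S := S)) (pone (S := S))
          rw [mul_one, one_mul] at h
          exact h.symm
      _ = Dmap gen u := (Dmap_eq gen u).symm
  · intro e f _ hf S _ gen
    set l := f.toList with hl
    have hBB : ∀ d : S, RestrictionMonoid.rstar d = d →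
        BD gen (BD gen d l) l = BD gen d l := by
      intro d hd
      have h := (WD gen (hf : ConGen.Rel baseRel (f * f) f) d hd).2
      rwa [FreeMonoid.toList_mul, BD_append] at h
    have haux : ∀ d : S, RestrictionMonoid.rstar d = d →
        FD gen d l = FD gen 1 l * (BD gen 1 l * d) := by
      intro d hd
      have h1 : BD gen (FD gen d l) l = BD gen 1 l * d := by
        have h := W_frob2 gen l (pone (S := S)) hd
        rw [one_mul] at h
        exact h.symm
      have h2 : BD gen (BD gen 1 l * d) l = BD gen 1 l * d := by
        rw [← h1]
        exact hBB _ (isP_FD gen hd l)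
      have h3 : FD gen d l = FD gen (BD gen 1 l * d) l := by
        have hw := W_frob gen l (pone (S := S)) (isP_FD gen hd l)
        rw [one_mul, h1] at hw
        have hm := W_mono gen l hd (pone (S := S))
        rw [mul_one] at hm
        rw [← hw, pcomm (isP_FD gen (pone (S := S)) l) (isP_FD gen hd l)]
        exact hm.symm
      have hw := W_frob gen l (pone (S := S)) (pmul (isP_BD gen (pone (S := S)) l) hd)
      rw [one_mul, h2] at hw
      rw [h3, ← hw]
    have key : ∀ d : S, RestrictionMonoid.rstar d = d →
        FD gen d l = FD gen 1 l * d := by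
      intro d hd
      have h5 := haux 1 (pone (S := S))
      rw [mul_one] at h5
      rw [haux d hd, ← mul_assoc, ← h5]
    calc Dmap gen (e * f)
        = FD gen (FD gen 1 e.toList) l := by
          rw [Dmap_eq, FreeMonoid.toList_mul, FD_append]
      _ = FD gen 1 l * FD gen 1 e.toList := key _ (isP_FD gen (pone (S := S)) _)
      _ = Dmap gen e * Dmap gen f :=
          pcomm (isP_FD gen (pone (S := S)) l) (isP_FD gen (pone (S := S)) e.toList)

end FreeInverse
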